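/- Let (Ω, 𝒜, μ) be a finite measure space, P a finite poset, and {A_p}_{p∈P} a family of measurable sets. Let 𝔛 be a class of subsets of P such that ⋂_{p∈B} A_p ⊆ ⋃_{p∈B'} A_p for each B ∈ 𝔛, where B' = {p ∈ P : p > b for every b ∈ B} is the set of strict upper bounds of B not in B. Let 𝔍 = {I ⊆ P : B ⊆ I for some B ∈ 𝔛}. Then μ(⋂_{p∈P} Ω∖A_p) = Σ_{I ∈ 2^P ∖ 𝔍} (−1)^{|I|} μ(⋂_{i∈I} A_i). -/

import Mathlib

open MeasureTheory Finset

lemma dohmen_key {P : Type*} [Fintype P] [DecidableEq P] [PartialOrder P]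
    (𝔛 : Finset (Finset P)) (S : Finset P)
    (hS : ∀ B ∈ 𝔛, B ⊆ S → ∃ q ∈ S, ∀ b ∈ B, b < q) :
    ∑ I ∈ (Finset.univ : Finset P).powerset.filter (fun I => ¬ ∃ B ∈ 𝔛, B ⊆ I),
      (-1 : ℝ) ^ I.card * (if I ⊆ S then 1 else 0)
      = if S = ∅ then 1 else 0 := by
  classical
  have hrw : ∑ I ∈ (Finset.univ : Finset P).powerset.filter (fun I => ¬ ∃ B ∈ 𝔛, B ⊆ I),
      (-1 : ℝ) ^ I.card * (if I ⊆ S then 1 else 0)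
      = ∑ I ∈ ((Finset.univ : Finset P).powerset.filter
          (fun I => ¬ ∃ B ∈ 𝔛, B ⊆ I)).filter (fun I => I ⊆ S),
        (-1 : ℝ) ^ I.card := by
    rw [Finset.sum_filter (fun I => I ⊆ S) (fun I : Finset P => (-1 : ℝ) ^ I.card)]
    exact Finset.sum_congr rfl (fun I _ => by by_cases h : I ⊆ S <;> simp [h])
  rw [hrw]
  by_cases hSe : S = ∅
  · subst hSe
    rw [if_pos rfl]
    have : (((Finset.univ : Finset P).powerset.filter
        (fun I => ¬ ∃ B ∈ 𝔛, B ⊆ I)).filter (fun I => I ⊆ (∅ : Finset P)))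
        = {∅} := by
      ext I
      simp only [Finset.mem_filter, Finset.mem_powerset, Finset.mem_singleton,
        Finset.subset_empty]
      constructor
      · rintro ⟨⟨-, -⟩, h⟩; exact h
      · rintro rfl
        refine ⟨⟨Finset.empty_subset _, ?_⟩, rfl⟩
        rintro ⟨B, hB, hBsub⟩
        rw [Finset.subset_empty] at hBsub
        subst hBsub
        obtain ⟨q, hq, -⟩ := hS ∅ hB (Finset.empty_subset _)
        exact absurd hq (by simp)
    rw [this]
    simp
  · rw [if_neg hSe]
    obtain ⟨m, hmS, hmax⟩ : ∃ m ∈ S, ∀ q ∈ S, ¬ m < q := by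
      obtain ⟨m, hm⟩ := Finset.exists_maximal (Finset.nonempty_iff_ne_empty.2 hSe)
      exact ⟨m, hm.1, fun q hq hlt => hlt.not_ge (hm.2 hq hlt.le)⟩
    -- no B ∈ 𝔛 with B ⊆ S contains m
    have hmB : ∀ B ∈ 𝔛, B ⊆ S → m ∉ B := by
      intro B hB hBS hmB
      obtain ⟨q, hqS, hq⟩ := hS B hB hBS
      exact hmax q hqS (hq m hmB)
    set T := (((Finset.univ : Finset P).powerset.filter
        (fun I => ¬ ∃ B ∈ 𝔛, B ⊆ I)).filter (fun I => I ⊆ S)) with hT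
    have hmemT : ∀ I, I ∈ T ↔ (¬ ∃ B ∈ 𝔛, B ⊆ I) ∧ I ⊆ S := by
      intro I; simp [hT, Finset.mem_filter]
    refine Finset.sum_involution
      (fun I _ => if m ∈ I then I.erase m else insert m I) ?_ ?_ ?_ ?_
    · intro I hI
      by_cases hm : m ∈ I
      · simp only [hm, if_true]
        rw [Finset.card_erase_of_mem hm]
        have hc : I.card ≠ 0 := by
          intro h; rw [Finset.card_eq_zero] at h; subst h; simp at hm
        have h1 : (-1 : ℝ) ^ I.card = (-1 : ℝ) ^ (I.card - 1) * (-1) := by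
          rw [← pow_succ, Nat.sub_add_cancel (Nat.one_le_iff_ne_zero.2 hc)]
        rw [h1]; ring
      · simp only [hm, if_false]
        rw [Finset.card_insert_of_notMem hm, pow_succ]
        ring
    · intro I hI _
      by_cases hm : m ∈ I
      · simp only [hm, if_true]
        intro h
        rw [← h] at hm
        exact Finset.notMem_erase m I hm
      · simp only [hm, if_false]
        intro h
        have hmm : m ∈ insert m I := Finset.mem_insert_self m I
        rw [h] at hmm
        exact hm hmm
    · intro I hI
      rw [hmemT] at hI ⊢
      obtain ⟨hgood, hIS⟩ := hI
      by_cases hm : m ∈ I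
      · simp only [hm, if_true]
        refine ⟨?_, (Finset.erase_subset m I).trans hIS⟩
        rintro ⟨B, hB, hBsub⟩
        exact hgood ⟨B, hB, hBsub.trans (Finset.erase_subset m I)⟩
      · simp only [hm, if_false]
        refine ⟨?_, Finset.insert_subset hmS hIS⟩
        rintro ⟨B, hB, hBsub⟩
        have hBS : B ⊆ S := hBsub.trans (Finset.insert_subset hmS hIS)
        have hmnB := hmB B hB hBS
        have : B ⊆ I := fun x hx => by
          rcases Finset.mem_insert.1 (hBsub hx) with h | h
          · exact absurd (h ▸ hx) hmnB
          · exact h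
        exact hgood ⟨B, hB, this⟩
    · intro I hI
      by_cases hm : m ∈ I
      · simp [hm, Finset.insert_erase hm]
      · simp [hm, Finset.erase_insert hm]

/-- Dohmen's ordering-based theorem, Theorem 1 of the paper.
For a poset `P` and a class `𝔛` of subsets `B` with `⋂_{p∈B} A_p ⊆ ⋃_{p∈B'} A_p`,
where `B' = {p : p > b for all b ∈ B}`, the inclusion-exclusion sum can be
restricted to the sets containing no member of `𝔛`. -/
theorem stmt_7 {Ω : Type*} [MeasurableSpace Ω] (μ : Measure Ω) [IsFiniteMeasure μ]
    {P : Type*} [Fintype P] [DecidableEq P] [PartialOrder P]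
    (A : P → Set Ω) (hA : ∀ p, MeasurableSet (A p))
    (𝔛 : Finset (Finset P))
    (h𝔛 : ∀ B ∈ 𝔛, (⋂ p ∈ B, A p) ⊆ ⋃ p ∈ {q : P | ∀ b ∈ B, b < q}, A p) :
    (μ (⋂ p : P, (A p)ᶜ)).toReal =
      ∑ I ∈ (Finset.univ : Finset P).powerset.filter
          (fun I => ¬ ∃ B ∈ 𝔛, B ⊆ I),
        (-1 : ℝ) ^ I.card * (μ (⋂ p ∈ I, A p)).toReal := by
  classical
  set F := (Finset.univ : Finset P).powerset.filter (fun I => ¬ ∃ B ∈ 𝔛, B ⊆ I) with hF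
  have hmeasI : ∀ I : Finset P, MeasurableSet (⋂ p ∈ I, A p) :=
    fun I => MeasurableSet.biInter (Set.to_countable _) (fun p _ => hA p)
  have hmeasC : MeasurableSet (⋂ p : P, (A p)ᶜ) :=
    MeasurableSet.iInter (fun p => (hA p).compl)
  -- pointwise identity
  have hpt : ∀ ω : Ω,
      Set.indicator (⋂ p : P, (A p)ᶜ) (1 : Ω → ℝ) ω
        = ∑ I ∈ F, (-1 : ℝ) ^ I.card * Set.indicator (⋂ p ∈ I, A p) (1 : Ω → ℝ) ω := by
    intro ω
    set S : Finset P := Finset.univ.filter (fun p => ω ∈ A p) with hSdef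
    have hmemS : ∀ p, p ∈ S ↔ ω ∈ A p := by intro p; simp [hSdef]
    have hind : ∀ I : Finset P,
        Set.indicator (⋂ p ∈ I, A p) (1 : Ω → ℝ) ω = if I ⊆ S then 1 else 0 := by
      intro I
      by_cases h : I ⊆ S
      · rw [if_pos h, Set.indicator_of_mem]
        · rfl
        · exact Set.mem_iInter₂.2 (fun p hp => (hmemS p).1 (h hp))
      · rw [if_neg h, Set.indicator_of_notMem]
        intro hmem
        exact h (fun p hp => (hmemS p).2 (Set.mem_iInter₂.1 hmem p hp))
    have hS : ∀ B ∈ 𝔛, B ⊆ S → ∃ q ∈ S, ∀ b ∈ B, b < q := by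
      intro B hB hBS
      have : ω ∈ ⋂ p ∈ B, A p :=
        Set.mem_iInter₂.2 (fun p hp => (hmemS p).1 (hBS hp))
      have := h𝔛 B hB this
      simp only [Set.mem_iUnion, Set.mem_setOf_eq] at this
      obtain ⟨q, hq1, hq2⟩ := this
      exact ⟨q, (hmemS q).2 hq2, hq1⟩
    have hLHS : Set.indicator (⋂ p : P, (A p)ᶜ) (1 : Ω → ℝ) ω = if S = ∅ then 1 else 0 := by
      by_cases h : S = ∅
      · rw [if_pos h, Set.indicator_of_mem]
        · rfl
        · refine Set.mem_iInter.2 (fun p hp => ?_)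
          have : p ∈ S := (hmemS p).2 hp
          rw [h] at this; simp at this
      · rw [if_neg h, Set.indicator_of_notMem]
        intro hmem
        obtain ⟨p, hp⟩ := Finset.nonempty_iff_ne_empty.2 h
        exact (Set.mem_iInter.1 hmem p) ((hmemS p).1 hp)
    rw [hLHS]
    calc (if S = ∅ then (1:ℝ) else 0)
        = ∑ I ∈ F, (-1 : ℝ) ^ I.card * (if I ⊆ S then 1 else 0) :=
          (dohmen_key 𝔛 S hS).symm
      _ = _ := by
          apply Finset.sum_congr rfl
          intro I _
          rw [hind I]
  -- integrate
  have hint : ∀ I : Finset P,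
      Integrable (fun ω => (-1 : ℝ) ^ I.card * Set.indicator (⋂ p ∈ I, A p) (1 : Ω → ℝ) ω) μ := by
    intro I
    apply Integrable.const_mul
    rw [integrable_indicator_iff (hmeasI I)]
    exact integrableOn_const (measure_ne_top μ _)
  calc (μ (⋂ p : P, (A p)ᶜ)).toReal
      = ∫ ω, Set.indicator (⋂ p : P, (A p)ᶜ) (1 : Ω → ℝ) ω ∂μ :=
        (integral_indicator_one hmeasC).symm
    _ = ∫ ω, ∑ I ∈ F, (-1 : ℝ) ^ I.card * Set.indicator (⋂ p ∈ I, A p) (1 : Ω → ℝ) ω ∂μ := by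
        exact integral_congr_ae (Filter.Eventually.of_forall hpt)
    _ = ∑ I ∈ F, ∫ ω, (-1 : ℝ) ^ I.card * Set.indicator (⋂ p ∈ I, A p) (1 : Ω → ℝ) ω ∂μ :=
        integral_finset_sum F (fun I _ => hint I)
    _ = ∑ I ∈ F, (-1 : ℝ) ^ I.card * (μ (⋂ p ∈ I, A p)).toReal := by
        apply Finset.sum_congr rfl
        intro I _
        rw [integral_const_mul, integral_indicator_one (hmeasI I)]
        rfl
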